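/- In the risk-neutral case γ = 0, the interval of discount factors (0,1) can be partitioned into finitely many subintervals on each of which a single stationary Markov policy is optimal: there exist k ∈ ℕ, points 0 = b_0 < b_1 < ⋯ < b_k = 1, and stationary Markov policies u_1, …, u_k : E → U such that for each j ∈ {1,…,k}, every β ∈ (b_{j-1}, b_j) and every x ∈ E, J_0(x,u_j;β) = sup_{π∈Π} J_0(x,π;β). -/

import Mathlib

open Filter Real

/-- A (history-dependent) policy: at time `n`, the action is a function of `(X_0, …, X_n)`. -/
abbrev Policy (E U : Type*) : Type _ := ∀ n : ℕ, (Fin (n + 1) → E) → U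

/-- The stationary Markov policy induced by `u : E → U`. -/
def stationaryPolicy {E U : Type*} (u : E → U) : Policy E U :=
  fun n h => u (h (Fin.last n))

/-- The Markov policy induced by a sequence `u : ℕ → E → U`. -/
def markovPolicy {E U : Type*} (u : ℕ → E → U) : Policy E U :=
  fun n h => u n (h (Fin.last n))

/-- The action taken at time `i` by policy `pol` along the path `ω = (x_0, …, x_n)`. -/
def act {E U : Type*} (pol : Policy E U) {n : ℕ} (ω : Fin (n + 1) → E) (i : Fin n) : U :=
  pol i.1 (fun j => ω (Fin.castLE (Nat.succ_le_succ i.2.le) j))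

/-- Probability of the path `ω = (x_0, …, x_n)` under policy `pol` started at `x`:
`∏_{i=0}^{n-1} P^{a_i}(x_i, x_{i+1})` if `x_0 = x`, and `0` otherwise. -/
def pathProb {E U : Type*} [DecidableEq E] (P : U → E → E → ℝ) (pol : Policy E U)
    (x : E) (n : ℕ) (ω : Fin (n + 1) → E) : ℝ :=
  (if ω 0 = x then 1 else 0) * ∏ i : Fin n, P (act pol ω i) (ω i.castSucc) (ω i.succ)

/-- Expectation `E_x^pol[f(X_0, …, X_n)]`. -/
noncomputable def expVal {E U : Type*} [Fintype E] [DecidableEq E]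
    (P : U → E → E → ℝ) (pol : Policy E U) (x : E) (n : ℕ)
    (f : (Fin (n + 1) → E) → ℝ) : ℝ :=
  ∑ ω : Fin (n + 1) → E, pathProb P pol x n ω * f ω

/-- The (possibly discounted) cumulative reward `Σ_{i=0}^{n-1} d i * c(X_i, a_i)` along `ω`. -/
def rewSum {E U : Type*} (c : E → U → ℝ) (pol : Policy E U) (d : ℕ → ℝ) (n : ℕ)
    (ω : Fin (n + 1) → E) : ℝ :=
  ∑ i : Fin n, d i.1 * c (ω i.castSucc) (act pol ω i)

/-- Long-run risk-sensitive averaged criterion `J_γ(x, pol)`. -/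
noncomputable def Javg {E U : Type*} [Fintype E] [DecidableEq E]
    (P : U → E → E → ℝ) (c : E → U → ℝ) (γ : ℝ) (x : E) (pol : Policy E U) : ℝ :=
  if γ = 0 then
    liminf (fun n : ℕ =>
      (1 / (n : ℝ)) * expVal P pol x n (rewSum c pol (fun _ => 1) n)) atTop
  else
    liminf (fun n : ℕ =>
      (1 / ((n : ℝ) * γ)) * Real.log (expVal P pol x n
        (fun ω => Real.exp (γ * rewSum c pol (fun _ => 1) n ω)))) atTop

/-- Discounted risk-sensitive criterion `J_γ(x, pol; β)`. -/
noncomputable def Jdisc {E U : Type*} [Fintype E] [DecidableEq E]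
    (P : U → E → E → ℝ) (c : E → U → ℝ) (γ : ℝ) (x : E) (pol : Policy E U) (β : ℝ) : ℝ :=
  if γ = 0 then
    limUnder atTop (fun n : ℕ => expVal P pol x n (rewSum c pol (fun i => β ^ i) n))
  else
    (1 / γ) * Real.log (limUnder atTop (fun n : ℕ =>
      expVal P pol x n (fun ω => Real.exp (γ * rewSum c pol (fun i => β ^ i) n ω))))

/-- Row-stochasticity of the family of transition matrices `(P^a)_{a ∈ U}`. -/
def IsStochastic {E U : Type*} [Fintype E] (P : U → E → E → ℝ) : Prop :=
  (∀ a x y, 0 ≤ P a x y) ∧ ∀ a x, ∑ y, P a x y = 1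

/-- Condition (C): strong uniform mixing, `min_{a} min_{x,y} P^a(x,y) > 0`. -/
def CondC {E U : Type*} (P : U → E → E → ℝ) : Prop :=
  ∀ a x y, 0 < P a x y

/-- `w` solves the risk-sensitive discounted Bellman equation for discount `β`. -/
def IsBellmanSol {E U : Type*} [Fintype E] [Fintype U]
    (P : U → E → E → ℝ) (c : E → U → ℝ) (β : ℝ) (w : E → ℝ → ℝ) : Prop :=
  ∀ x : E, ∀ γ : ℝ, γ ≠ 0 →
    w x γ = ⨆ a : U, (c x a + (1 / γ) * Real.log (∑ y, Real.exp (w y (β * γ)) * P a x y))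


open Filter Real

set_option linter.unusedSectionVars false

section MDPwork

variable {E U : Type*} [Fintype E] [DecidableEq E] [Fintype U] [Nonempty E] [Nonempty U]

/-- Shifted policy after observing initial state `x`. -/
def shiftPol (pol : Policy E U) (x : E) : Policy E U := fun m h => pol (m + 1) (Fin.cons x h)

lemma shiftPol_stationary (u : E → U) (x : E) :
    shiftPol (stationaryPolicy u) x = stationaryPolicy u := by
  funext m h
  simp only [shiftPol, stationaryPolicy]
  rw [← Fin.succ_last, Fin.cons_succ]

lemma act_cons (pol : Policy E U) {n : ℕ} (x : E) (ω : Fin (n + 1) → E) (i : Fin n) :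
    act pol (Fin.cons x ω) i.succ = act (shiftPol pol x) ω i := by
  show pol (i.1 + 1) _ = pol (i.1 + 1) _
  congr 1
  funext j
  refine Fin.cases rfl (fun j' => rfl) j

lemma act_cons_zero (pol : Policy E U) {n : ℕ} (x : E) (ω : Fin (n + 1) → E) :
    act pol (Fin.cons x ω) (0 : Fin (n + 1)) = pol 0 (fun _ => x) := by
  show pol 0 _ = pol 0 _
  congr 1
  funext j
  refine Fin.cases rfl (fun j' => j'.elim0) j

lemma pathProb_cons (P : U → E → E → ℝ) (pol : Policy E U) (x x0 : E) (n : ℕ)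
    (ω : Fin (n + 1) → E) :
    pathProb P pol x (n + 1) (Fin.cons x0 ω) =
      (if x0 = x then 1 else 0) * (P (pol 0 (fun _ => x0)) x0 (ω 0) *
        ∏ i : Fin n, P (act (shiftPol pol x0) ω i) (ω i.castSucc) (ω i.succ)) := by
  unfold pathProb
  rw [Fin.prod_univ_succ, Fin.cons_zero]
  congr 1
  congr 1
  · simp only [act_cons_zero, Fin.castSucc_zero, Fin.cons_zero, Fin.cons_succ]
  · refine Finset.prod_congr rfl (fun i _ => ?_)
    rw [act_cons]
    simp only [← Fin.succ_castSucc, Fin.cons_succ]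

lemma rewSum_cons (c : E → U → ℝ) (pol : Policy E U) (β : ℝ) (x0 : E) (n : ℕ)
    (ω : Fin (n + 1) → E) :
    rewSum c pol (fun i => β ^ i) (n + 1) (Fin.cons x0 ω) =
      c x0 (pol 0 (fun _ => x0)) +
        β * rewSum c (shiftPol pol x0) (fun i => β ^ i) n ω := by
  unfold rewSum
  rw [Fin.sum_univ_succ]
  congr 1
  · simp only [Fin.castSucc_zero, Fin.cons_zero, act_cons_zero]
    simp
  · rw [Finset.mul_sum]
    refine Finset.sum_congr rfl (fun i _ => ?_)
    rw [act_cons]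
    simp only [← Fin.succ_castSucc, Fin.cons_succ]
    show β ^ (i.1 + 1) * _ = _
    rw [pow_succ]
    ring

end MDPwork
section MDPwork2

variable {E U : Type*} [Fintype E] [DecidableEq E] [Fintype U] [Nonempty E] [Nonempty U]

lemma expVal_succ (P : U → E → E → ℝ) (pol : Policy E U) (x : E) (n : ℕ)
    (f : (Fin (n + 2) → E) → ℝ) :
    expVal P pol x (n + 1) f =
      ∑ y, P (pol 0 (fun _ => x)) x y *
        expVal P (shiftPol pol x) y n (fun ω => f (Fin.cons x ω)) := by
  unfold expVal
  rw [← (Fin.consEquiv (fun _ : Fin (n + 2) => E)).sum_comp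
      (fun ω => pathProb P pol x (n + 1) ω * f ω)]
  rw [Fintype.sum_prod_type]
  have hL : ∀ x0 : E, ∀ ωr : Fin (n + 1) → E,
      (Fin.consEquiv (fun _ : Fin (n + 2) => E)) (x0, ωr) = Fin.cons x0 ωr := fun _ _ => rfl
  simp only [hL, pathProb_cons]
  have hcol : ∀ x0 : E, (∑ ωr : Fin (n + 1) → E,
      (if x0 = x then 1 else 0) * (P (pol 0 fun _ => x0) x0 (ωr 0) *
        ∏ i : Fin n, P (act (shiftPol pol x0) ωr i) (ωr i.castSucc) (ωr i.succ)) *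
        f (Fin.cons x0 ωr))
      = if x0 = x then (∑ ωr : Fin (n + 1) → E,
        (P (pol 0 fun _ => x) x (ωr 0) *
          ∏ i : Fin n, P (act (shiftPol pol x) ωr i) (ωr i.castSucc) (ωr i.succ)) *
          f (Fin.cons x ωr)) else 0 := by
    intro x0
    by_cases h : x0 = x
    · subst h; simp only [eq_self_iff_true, if_true, one_mul]
    · simp [h]
  rw [Finset.sum_congr rfl (fun x0 _ => hcol x0), Finset.sum_ite_eq' Finset.univ x]
  rw [if_pos (Finset.mem_univ x)]
  unfold pathProb
  simp only [Finset.mul_sum]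
  rw [Finset.sum_comm]
  refine Finset.sum_congr rfl (fun ωr _ => ?_)
  simp only [ite_mul, one_mul, zero_mul, mul_ite, mul_zero]
  rw [Finset.sum_ite_eq Finset.univ (ωr 0)]
  simp [mul_assoc]

lemma sum_pathProb (P : U → E → E → ℝ) (hP : IsStochastic P) (pol : Policy E U)
    (x : E) (n : ℕ) : ∑ ω : Fin (n + 1) → E, pathProb P pol x n ω = 1 := by
  induction n generalizing pol x with
  | zero =>
      unfold pathProb
      rw [← (Equiv.funUnique (Fin 1) E).symm.sum_comp
        (fun ω : Fin 1 → E => (if ω 0 = x then (1:ℝ) else 0) * ∏ i : Fin 0, P (act pol ω i) (ω i.castSucc) (ω i.succ))]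
      simp
  | succ n ih =>
      have h := expVal_succ P pol x n (fun _ => (1:ℝ))
      unfold expVal at h
      simp only [mul_one] at h
      rw [h]
      have : ∀ y : E, (∑ ω : Fin (n+1) → E, pathProb P (shiftPol pol x) y n ω) = 1 :=
        fun y => ih _ y
      simp only [this, mul_one]
      exact hP.2 _ _

noncomputable def Sval (P : U → E → E → ℝ) (c : E → U → ℝ) (β : ℝ) (pol : Policy E U)
    (x : E) (n : ℕ) : ℝ :=
  expVal P pol x n (rewSum c pol (fun i => β ^ i) n)

lemma Sval_zero (P : U → E → E → ℝ) (c : E → U → ℝ) (β : ℝ) (pol : Policy E U) (x : E) :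
    Sval P c β pol x 0 = 0 := by
  unfold Sval expVal rewSum
  simp

lemma Sval_succ (P : U → E → E → ℝ) (hP : IsStochastic P) (c : E → U → ℝ) (β : ℝ)
    (pol : Policy E U) (x : E) (n : ℕ) :
    Sval P c β pol x (n + 1) =
      c x (pol 0 (fun _ => x)) +
        β * ∑ y, P (pol 0 (fun _ => x)) x y * Sval P c β (shiftPol pol x) y n := by
  unfold Sval
  rw [expVal_succ]
  have hrw : ∀ y : E, expVal P (shiftPol pol x) y n
      (fun ω => rewSum c pol (fun i => β ^ i) (n+1) (Fin.cons x ω))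
      = c x (pol 0 (fun _ => x)) +
        β * expVal P (shiftPol pol x) y n (rewSum c (shiftPol pol x) (fun i => β ^ i) n) := by
    intro y
    unfold expVal
    simp only [rewSum_cons, mul_add, Finset.sum_add_distrib]
    rw [← Finset.sum_mul, sum_pathProb P hP, one_mul]
    congr 1
    rw [Finset.mul_sum]
    refine Finset.sum_congr rfl (fun ω _ => ?_)
    ring
  simp only [hrw, mul_add]
  rw [Finset.sum_add_distrib, ← Finset.sum_mul, hP.2, one_mul]
  congr 1
  rw [Finset.mul_sum]
  refine Finset.sum_congr rfl (fun y _ => ?_)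
  ring

end MDPwork2
section MDPwork3

variable {E U : Type*} [Fintype E] [DecidableEq E] [Fintype U] [Nonempty E] [Nonempty U]

/-- Expected next-value operator for a fixed action. -/
noncomputable def Tpol (P : U → E → E → ℝ) (c : E → U → ℝ) (u : E → U) (β : ℝ)
    (v : E → ℝ) : E → ℝ :=
  fun x => c x (u x) + β * ∑ y, P (u x) x y * v y

noncomputable def Topt (P : U → E → E → ℝ) (c : E → U → ℝ) (β : ℝ) (v : E → ℝ) : E → ℝ :=
  fun x => ⨆ a : U, (c x a + β * ∑ y, P a x y * v y)

lemma sum_P_diff_le (P : U → E → E → ℝ) (hP : IsStochastic P) (a : U) (x : E)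
    (v w : E → ℝ) :
    |∑ y, P a x y * v y - ∑ y, P a x y * w y| ≤ dist v w := by
  rw [← Finset.sum_sub_distrib]
  calc |∑ y, (P a x y * v y - P a x y * w y)|
      ≤ ∑ y, |P a x y * v y - P a x y * w y| := Finset.abs_sum_le_sum_abs _ _
    _ = ∑ y, P a x y * |v y - w y| := by
        refine Finset.sum_congr rfl (fun y _ => ?_)
        rw [← mul_sub, abs_mul, abs_of_nonneg (hP.1 a x y)]
    _ ≤ ∑ y, P a x y * dist v w := by
        refine Finset.sum_le_sum (fun y _ => ?_)
        refine mul_le_mul_of_nonneg_left ?_ (hP.1 a x y)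
        rw [← Real.dist_eq]
        exact dist_le_pi_dist v w y
    _ = dist v w := by rw [← Finset.sum_mul, hP.2, one_mul]

lemma tpol_lipschitz (P : U → E → E → ℝ) (hP : IsStochastic P) (c : E → U → ℝ)
    (u : E → U) {β : ℝ} (hβ0 : 0 ≤ β) (hβ1 : β < 1) :
    ContractingWith ⟨β, hβ0⟩ (Tpol P c u β) := by
  constructor
  · exact_mod_cast hβ1
  · apply LipschitzWith.of_dist_le_mul
    intro v w
    have hd : (0:ℝ) ≤ β * dist v w := mul_nonneg hβ0 dist_nonneg
    show dist (Tpol P c u β v) (Tpol P c u β w) ≤ β * dist v w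
    rw [dist_pi_le_iff hd]
    intro x
    simp only [Tpol, Real.dist_eq, add_sub_add_left_eq_sub, ← mul_sub]
    rw [abs_mul, abs_of_nonneg hβ0]
    exact mul_le_mul_of_nonneg_left (sum_P_diff_le P hP (u x) x v w) hβ0

lemma topt_lipschitz (P : U → E → E → ℝ) (hP : IsStochastic P) (c : E → U → ℝ)
    {β : ℝ} (hβ0 : 0 ≤ β) (hβ1 : β < 1) :
    ContractingWith ⟨β, hβ0⟩ (Topt P c β) := by
  constructor
  · exact_mod_cast hβ1
  · apply LipschitzWith.of_dist_le_mul
    intro v w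
    have hd : (0:ℝ) ≤ β * dist v w := mul_nonneg hβ0 dist_nonneg
    show dist (Topt P c β v) (Topt P c β w) ≤ β * dist v w
    rw [dist_pi_le_iff hd]
    intro x
    have key : ∀ v w : E → ℝ, Topt P c β v x ≤ Topt P c β w x + β * dist v w := by
      intro v w
      simp only [Topt]
      refine ciSup_le (fun a => ?_)
      have h1 : c x a + β * ∑ y, P a x y * v y
          ≤ (c x a + β * ∑ y, P a x y * w y) + β * dist v w := by
        have := sum_P_diff_le P hP a x v w
        have h2 : ∑ y, P a x y * v y - ∑ y, P a x y * w y ≤ dist v w :=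
          (abs_le.mp this).2
        nlinarith [dist_nonneg (x := v) (y := w)]
      refine h1.trans (add_le_add_left ?_ _)
      exact le_ciSup (f := fun a : U => c x a + β * ∑ y, P a x y * w y)
        (Set.Finite.bddAbove (Set.finite_range _)) a
    rw [Real.dist_eq, abs_le]
    constructor
    · have := key w v
      rw [dist_comm] at this
      linarith
    · have := key v w
      linarith

/-- Value of the stationary policy `u` at discount `β`, as the fixed point of `Tpol`. -/
noncomputable def Vstat (P : U → E → E → ℝ) (c : E → U → ℝ) (hP : IsStochastic P)
    (u : E → U) {β : ℝ} (hβ0 : 0 ≤ β) (hβ1 : β < 1) : E → ℝ :=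
  ContractingWith.fixedPoint (Tpol P c u β) (tpol_lipschitz P hP c u hβ0 hβ1)

/-- Optimal value at discount `β`, as the fixed point of `Topt`. -/
noncomputable def Vopt (P : U → E → E → ℝ) (c : E → U → ℝ) (hP : IsStochastic P)
    {β : ℝ} (hβ0 : 0 ≤ β) (hβ1 : β < 1) : E → ℝ :=
  ContractingWith.fixedPoint (Topt P c β) (topt_lipschitz P hP c hβ0 hβ1)

lemma Vstat_fixed (P : U → E → E → ℝ) (c : E → U → ℝ) (hP : IsStochastic P)
    (u : E → U) {β : ℝ} (hβ0 : 0 ≤ β) (hβ1 : β < 1) (x : E) :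
    Vstat P c hP u hβ0 hβ1 x
      = c x (u x) + β * ∑ y, P (u x) x y * Vstat P c hP u hβ0 hβ1 y := by
  conv_lhs => rw [show Vstat P c hP u hβ0 hβ1
    = Tpol P c u β (Vstat P c hP u hβ0 hβ1) from
      (ContractingWith.fixedPoint_isFixedPt (tpol_lipschitz P hP c u hβ0 hβ1)).symm]
  rfl

lemma Vopt_fixed (P : U → E → E → ℝ) (c : E → U → ℝ) (hP : IsStochastic P)
    {β : ℝ} (hβ0 : 0 ≤ β) (hβ1 : β < 1) (x : E) :
    Vopt P c hP hβ0 hβ1 x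
      = ⨆ a : U, (c x a + β * ∑ y, P a x y * Vopt P c hP hβ0 hβ1 y) := by
  conv_lhs => rw [show Vopt P c hP hβ0 hβ1
    = Topt P c β (Vopt P c hP hβ0 hβ1) from
      (ContractingWith.fixedPoint_isFixedPt (topt_lipschitz P hP c hβ0 hβ1)).symm]
  rfl

end MDPwork3
section MDPwork4

variable {E U : Type*} [Fintype E] [DecidableEq E] [Fintype U] [Nonempty E] [Nonempty U]

instance : Nonempty (Policy E U) := ⟨fun _ _ => Classical.arbitrary U⟩

lemma abs_sum_P_le (P : U → E → E → ℝ) (hP : IsStochastic P) (a : U) (x : E)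
    (g : E → ℝ) (B : ℝ) (h : ∀ y, |g y| ≤ B) :
    |∑ y, P a x y * g y| ≤ B := by
  calc |∑ y, P a x y * g y| ≤ ∑ y, |P a x y * g y| := Finset.abs_sum_le_sum_abs _ _
    _ = ∑ y, P a x y * |g y| := by
        refine Finset.sum_congr rfl (fun y _ => ?_)
        rw [abs_mul, abs_of_nonneg (hP.1 a x y)]
    _ ≤ ∑ y, P a x y * B := by
        refine Finset.sum_le_sum (fun y _ => mul_le_mul_of_nonneg_left (h y) (hP.1 a x y))
    _ = B := by rw [← Finset.sum_mul, hP.2, one_mul]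

lemma stationary_zero_apply (u : E → U) (x : E) :
    (stationaryPolicy u : Policy E U) 0 (fun _ => x) = u x := rfl

lemma Sval_stat_dist (P : U → E → E → ℝ) (c : E → U → ℝ) (hP : IsStochastic P)
    (u : E → U) {β : ℝ} (hβ0 : 0 ≤ β) (hβ1 : β < 1) (n : ℕ) (x : E) :
    |Sval P c β (stationaryPolicy u) x n - Vstat P c hP u hβ0 hβ1 x|
      ≤ β ^ n * ‖Vstat P c hP u hβ0 hβ1‖ := by
  induction n generalizing x with
  | zero =>
      rw [Sval_zero, zero_sub, abs_neg, pow_zero, one_mul, ← Real.norm_eq_abs]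
      exact norm_le_pi_norm _ x
  | succ n ih =>
      rw [Sval_succ P hP, stationary_zero_apply, shiftPol_stationary,
        Vstat_fixed P c hP u hβ0 hβ1 x]
      have : c x (u x) + β * ∑ y, P (u x) x y * Sval P c β (stationaryPolicy u) y n
          - (c x (u x) + β * ∑ y, P (u x) x y * Vstat P c hP u hβ0 hβ1 y)
          = β * ∑ y, P (u x) x y *
            (Sval P c β (stationaryPolicy u) y n - Vstat P c hP u hβ0 hβ1 y) := by
        rw [Finset.mul_sum]
        have : ∀ y : E, P (u x) x y *
            (Sval P c β (stationaryPolicy u) y n - Vstat P c hP u hβ0 hβ1 y)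
            = P (u x) x y * Sval P c β (stationaryPolicy u) y n
              - P (u x) x y * Vstat P c hP u hβ0 hβ1 y := fun y => by ring
        simp only [this, mul_sub, Finset.sum_sub_distrib]
        simp [Finset.mul_sum, mul_assoc]
      rw [this, abs_mul, abs_of_nonneg hβ0, pow_succ, mul_comm (β ^ n) _, mul_assoc]
      refine mul_le_mul_of_nonneg_left ?_ hβ0
      exact abs_sum_P_le P hP _ _ _ _ (fun y => ih y)

lemma Sval_stat_tendsto (P : U → E → E → ℝ) (c : E → U → ℝ) (hP : IsStochastic P)
    (u : E → U) {β : ℝ} (hβ0 : 0 ≤ β) (hβ1 : β < 1) (x : E) :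
    Filter.Tendsto (fun n => Sval P c β (stationaryPolicy u) x n) atTop
      (nhds (Vstat P c hP u hβ0 hβ1 x)) := by
  rw [tendsto_iff_norm_sub_tendsto_zero]
  refine squeeze_zero (g := fun n => β ^ n * ‖Vstat P c hP u hβ0 hβ1‖)
    (fun n => norm_nonneg _) (fun n => ?_) ?_
  · rw [Real.norm_eq_abs]
    exact (Sval_stat_dist P c hP u hβ0 hβ1 n x)
  · have h1 : Filter.Tendsto (fun n : ℕ => β ^ n) atTop (nhds 0) :=
      tendsto_pow_atTop_nhds_zero_of_lt_one hβ0 hβ1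
    simpa using h1.mul_const _

lemma Jdisc_eq_Sval_lim (P : U → E → E → ℝ) (c : E → U → ℝ) (β : ℝ) (pol : Policy E U)
    (x : E) :
    Jdisc P c 0 x pol β = limUnder atTop (fun n => Sval P c β pol x n) := by
  simp only [Jdisc, if_pos rfl]
  rfl

lemma Jdisc_stat (P : U → E → E → ℝ) (c : E → U → ℝ) (hP : IsStochastic P)
    (u : E → U) {β : ℝ} (hβ0 : 0 ≤ β) (hβ1 : β < 1) (x : E) :
    Jdisc P c 0 x (stationaryPolicy u) β = Vstat P c hP u hβ0 hβ1 x := by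
  rw [Jdisc_eq_Sval_lim]
  exact (Sval_stat_tendsto P c hP u hβ0 hβ1 x).limUnder_eq

/-- A uniform bound on the reward function. -/
noncomputable def Mbound (c : E → U → ℝ) : ℝ := ∑ p : E × U, |c p.1 p.2|

lemma abs_c_le_Mbound (c : E → U → ℝ) (x : E) (a : U) : |c x a| ≤ Mbound c :=
  Finset.single_le_sum (f := fun p : E × U => |c p.1 p.2|)
    (fun _ _ => abs_nonneg _) (Finset.mem_univ (x, a))

lemma Sval_succ_sub (P : U → E → E → ℝ) (c : E → U → ℝ) (hP : IsStochastic P)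
    {β : ℝ} (hβ0 : 0 ≤ β) (n : ℕ) (pol : Policy E U) (x : E) :
    |Sval P c β pol x (n + 1) - Sval P c β pol x n| ≤ β ^ n * Mbound c := by
  induction n generalizing pol x with
  | zero =>
      rw [Sval_zero, sub_zero, Sval_succ P hP]
      simp only [Sval_zero, mul_zero, Finset.sum_const_zero, add_zero, pow_zero, one_mul]
      exact abs_c_le_Mbound c x _
  | succ n ih =>
      rw [Sval_succ P hP c β pol x (n+1), Sval_succ P hP c β pol x n]
      have heq : c x (pol 0 fun _ => x) +
            β * ∑ y, P (pol 0 fun _ => x) x y * Sval P c β (shiftPol pol x) y (n + 1)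
          - (c x (pol 0 fun _ => x) +
            β * ∑ y, P (pol 0 fun _ => x) x y * Sval P c β (shiftPol pol x) y n)
          = β * ∑ y, P (pol 0 fun _ => x) x y *
            (Sval P c β (shiftPol pol x) y (n + 1) - Sval P c β (shiftPol pol x) y n) := by
        simp only [mul_sub, Finset.sum_sub_distrib, Finset.mul_sum]
        ring
      rw [heq, abs_mul, abs_of_nonneg hβ0, pow_succ, mul_comm (β ^ n) β, mul_assoc]
      refine mul_le_mul_of_nonneg_left ?_ hβ0
      exact abs_sum_P_le P hP _ _ _ _ (fun y => ih _ y)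

lemma Sval_cauchy (P : U → E → E → ℝ) (c : E → U → ℝ) (hP : IsStochastic P)
    {β : ℝ} (hβ0 : 0 ≤ β) (hβ1 : β < 1) (pol : Policy E U) (x : E) :
    ∃ L : ℝ, Filter.Tendsto (fun n => Sval P c β pol x n) atTop (nhds L) := by
  refine cauchySeq_tendsto_of_complete ?_
  refine cauchySeq_of_le_geometric β (Mbound c) hβ1 (fun n => ?_)
  rw [Real.dist_eq, abs_sub_comm, mul_comm]
  exact Sval_succ_sub P c hP hβ0 n pol x

lemma Sval_le_Vopt (P : U → E → E → ℝ) (c : E → U → ℝ) (hP : IsStochastic P)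
    {β : ℝ} (hβ0 : 0 ≤ β) (hβ1 : β < 1) (n : ℕ) (pol : Policy E U) (x : E) :
    Sval P c β pol x n ≤ Vopt P c hP hβ0 hβ1 x + β ^ n * ‖Vopt P c hP hβ0 hβ1‖ := by
  induction n generalizing pol x with
  | zero =>
      rw [Sval_zero, pow_zero, one_mul]
      have := norm_le_pi_norm (Vopt P c hP hβ0 hβ1) x
      rw [Real.norm_eq_abs] at this
      have := (abs_le.mp this).1
      linarith
  | succ n ih =>
      rw [Sval_succ P hP]
      have hstep : ∑ y, P (pol 0 fun _ => x) x y * Sval P c β (shiftPol pol x) y n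
          ≤ (∑ y, P (pol 0 fun _ => x) x y * Vopt P c hP hβ0 hβ1 y)
            + β ^ n * ‖Vopt P c hP hβ0 hβ1‖ := by
        calc ∑ y, P (pol 0 fun _ => x) x y * Sval P c β (shiftPol pol x) y n
            ≤ ∑ y, P (pol 0 fun _ => x) x y *
              (Vopt P c hP hβ0 hβ1 y + β ^ n * ‖Vopt P c hP hβ0 hβ1‖) := by
              refine Finset.sum_le_sum (fun y _ =>
                mul_le_mul_of_nonneg_left (ih _ y) (hP.1 _ x y))
          _ = (∑ y, P (pol 0 fun _ => x) x y * Vopt P c hP hβ0 hβ1 y)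
              + β ^ n * ‖Vopt P c hP hβ0 hβ1‖ := by
              simp only [mul_add, Finset.sum_add_distrib]
              rw [← Finset.sum_mul, hP.2, one_mul]
      have hbell : c x (pol 0 fun _ => x) +
          β * ∑ y, P (pol 0 fun _ => x) x y * Vopt P c hP hβ0 hβ1 y
          ≤ Vopt P c hP hβ0 hβ1 x := by
        rw [Vopt_fixed P c hP hβ0 hβ1 x]
        exact le_ciSup (f := fun a : U => c x a + β * ∑ y, P a x y * Vopt P c hP hβ0 hβ1 y)
          (Set.Finite.bddAbove (Set.finite_range _)) _
      have h2 : β * (β ^ n * ‖Vopt P c hP hβ0 hβ1‖) = β ^ (n+1) * ‖Vopt P c hP hβ0 hβ1‖ := by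
        rw [pow_succ]; ring
      nlinarith [hP.1 (pol 0 fun _ => x) x x]

lemma Jdisc_le_Vopt (P : U → E → E → ℝ) (c : E → U → ℝ) (hP : IsStochastic P)
    {β : ℝ} (hβ0 : 0 ≤ β) (hβ1 : β < 1) (pol : Policy E U) (x : E) :
    Jdisc P c 0 x pol β ≤ Vopt P c hP hβ0 hβ1 x := by
  obtain ⟨L, hL⟩ := Sval_cauchy P c hP hβ0 hβ1 pol x
  rw [Jdisc_eq_Sval_lim, hL.limUnder_eq]
  have hR : Filter.Tendsto
      (fun n : ℕ => Vopt P c hP hβ0 hβ1 x + β ^ n * ‖Vopt P c hP hβ0 hβ1‖) atTop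
      (nhds (Vopt P c hP hβ0 hβ1 x)) := by
    have h1 : Filter.Tendsto (fun n : ℕ => β ^ n) atTop (nhds 0) :=
      tendsto_pow_atTop_nhds_zero_of_lt_one hβ0 hβ1
    have := (h1.mul_const (‖Vopt P c hP hβ0 hβ1‖)).const_add (Vopt P c hP hβ0 hβ1 x)
    simpa using this
  exact le_of_tendsto_of_tendsto' hL hR (fun n => Sval_le_Vopt P c hP hβ0 hβ1 n pol x)

lemma exists_opt_stationary (P : U → E → E → ℝ) (c : E → U → ℝ) (hP : IsStochastic P)
    {β : ℝ} (hβ0 : 0 ≤ β) (hβ1 : β < 1) :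
    ∃ us : E → U, Vstat P c hP us hβ0 hβ1 = Vopt P c hP hβ0 hβ1 := by
  have hch : ∀ x : E, ∃ a : U, ∀ a' : U,
      c x a' + β * ∑ y, P a' x y * Vopt P c hP hβ0 hβ1 y
        ≤ c x a + β * ∑ y, P a x y * Vopt P c hP hβ0 hβ1 y := fun x =>
    Finite.exists_max _
  choose us hus using hch
  refine ⟨us, ?_⟩
  have hfix : Function.IsFixedPt (Tpol P c us β) (Vopt P c hP hβ0 hβ1) := by
    funext x
    show c x (us x) + β * ∑ y, P (us x) x y * Vopt P c hP hβ0 hβ1 y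
      = Vopt P c hP hβ0 hβ1 x
    rw [Vopt_fixed P c hP hβ0 hβ1 x]
    refine le_antisymm ?_ (ciSup_le (fun a => hus x a))
    exact le_ciSup (f := fun a : U => c x a + β * ∑ y, P a x y * Vopt P c hP hβ0 hβ1 y)
      (Set.Finite.bddAbove (Set.finite_range _)) _
  exact ((tpol_lipschitz P hP c us hβ0 hβ1).fixedPoint_unique hfix).symm

lemma iSup_Jdisc_eq_Vopt (P : U → E → E → ℝ) (c : E → U → ℝ) (hP : IsStochastic P)
    {β : ℝ} (hβ0 : 0 ≤ β) (hβ1 : β < 1) (x : E) :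
    (⨆ pol : Policy E U, Jdisc P c 0 x pol β) = Vopt P c hP hβ0 hβ1 x := by
  obtain ⟨us, hus⟩ := exists_opt_stationary P c hP hβ0 hβ1
  refine le_antisymm (ciSup_le (fun pol => Jdisc_le_Vopt P c hP hβ0 hβ1 pol x)) ?_
  have h1 : Jdisc P c 0 x (stationaryPolicy us) β = Vopt P c hP hβ0 hβ1 x := by
    rw [Jdisc_stat P c hP us hβ0 hβ1 x, hus]
  rw [← h1]
  exact le_ciSup (f := fun pol : Policy E U => Jdisc P c 0 x pol β)
    ⟨Vopt P c hP hβ0 hβ1 x, by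
      rintro r ⟨pol, rfl⟩
      exact Jdisc_le_Vopt P c hP hβ0 hβ1 pol x⟩ _

end MDPwork4
section MDPwork5

open Polynomial Matrix

variable {E U : Type*} [Fintype E] [DecidableEq E] [Fintype U] [Nonempty E] [Nonempty U]

noncomputable def pmat (P : U → E → E → ℝ) (u : E → U) : Matrix E E (Polynomial ℝ) :=
  Matrix.of fun x y => (if x = y then 1 else 0) - Polynomial.X * Polynomial.C (P (u x) x y)

noncomputable def Bmat (P : U → E → E → ℝ) (u : E → U) (β : ℝ) : Matrix E E ℝ :=
  Matrix.of fun x y => (if x = y then 1 else 0) - β * P (u x) x y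

lemma pmat_map (P : U → E → E → ℝ) (u : E → U) (β : ℝ) :
    (Polynomial.evalRingHom β).mapMatrix (pmat P u) = Bmat P u β := by
  ext x y
  simp only [RingHom.mapMatrix_apply, Matrix.map_apply, pmat, Bmat, Matrix.of_apply]
  rw [map_sub, Polynomial.coe_evalRingHom, Polynomial.eval_mul, Polynomial.eval_X,
    Polynomial.eval_C]
  congr 1
  split <;> simp

lemma Bmat_mulVec (P : U → E → E → ℝ) (u : E → U) (β : ℝ) (v : E → ℝ) (x : E) :
    (Bmat P u β *ᵥ v) x = v x - β * ∑ y, P (u x) x y * v y := by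
  simp only [Matrix.mulVec, dotProduct, Bmat, Matrix.of_apply, sub_mul, ite_mul,
    one_mul, zero_mul, Finset.sum_sub_distrib, Finset.sum_ite_eq, Finset.mem_univ, if_true]
  rw [Finset.mul_sum]
  congr 1
  exact Finset.sum_congr rfl (fun y _ => by ring)

lemma Bmat_det_ne (P : U → E → E → ℝ) (hP : IsStochastic P) (u : E → U) {β : ℝ}
    (hβ0 : 0 ≤ β) (hβ1 : β < 1) : (Bmat P u β).det ≠ 0 := by
  intro h
  obtain ⟨v, hv0, hv⟩ := (Matrix.exists_mulVec_eq_zero_iff).mpr h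
  obtain ⟨x0, hx0⟩ := Finite.exists_max (fun x : E => |v x|)
  have hvx : ∀ x, v x = β * ∑ y, P (u x) x y * v y := by
    intro x
    have := congrFun hv x
    rw [Bmat_mulVec] at this
    have h0 : (0 : E → ℝ) x = 0 := rfl
    rw [h0] at this
    linarith
  have hb : |v x0| ≤ β * |v x0| := by
    conv_lhs => rw [hvx x0]
    rw [abs_mul, abs_of_nonneg hβ0]
    exact mul_le_mul_of_nonneg_left
      (abs_sum_P_le P hP _ _ _ _ (fun y => hx0 y)) hβ0
  have hpos : 0 < |v x0| := by
    obtain ⟨x1, hx1⟩ := Function.ne_iff.mp hv0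
    have : 0 < |v x1| := abs_pos.mpr hx1
    exact lt_of_lt_of_le this (hx0 x1)
  nlinarith

noncomputable def dpoly (P : U → E → E → ℝ) (u : E → U) : Polynomial ℝ := (pmat P u).det

noncomputable def wpoly (P : U → E → E → ℝ) (c : E → U → ℝ) (u : E → U) (x : E) :
    Polynomial ℝ :=
  ((pmat P u).adjugate *ᵥ fun y => Polynomial.C (c y (u y))) x

lemma eval_dpoly (P : U → E → E → ℝ) (u : E → U) (β : ℝ) :
    (dpoly P u).eval β = (Bmat P u β).det := by
  have := RingHom.map_det (Polynomial.evalRingHom β) (pmat P u)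
  rw [pmat_map] at this
  simpa [dpoly] using this

lemma dpoly_pos (P : U → E → E → ℝ) (hP : IsStochastic P) (u : E → U) {β : ℝ}
    (hβ0 : 0 ≤ β) (hβ1 : β < 1) : 0 < (dpoly P u).eval β := by
  have hne : ∀ t : ℝ, 0 ≤ t → t < 1 → (dpoly P u).eval t ≠ 0 := by
    intro t ht0 ht1
    rw [eval_dpoly]
    exact Bmat_det_ne P hP u ht0 ht1
  have h0 : (dpoly P u).eval 0 = 1 := by
    rw [eval_dpoly]
    have : Bmat P u 0 = 1 := by
      ext x y
      simp [Bmat, Matrix.one_apply]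
    rw [this, Matrix.det_one]
  by_contra hle
  push_neg at hle
  have hlt : (dpoly P u).eval β < 0 :=
    lt_of_le_of_ne hle (hne β hβ0 hβ1)
  have hcont : ContinuousOn (fun t => (dpoly P u).eval t) (Set.Icc 0 β) :=
    ((dpoly P u).continuous).continuousOn
  have hmem : (0:ℝ) ∈ Set.Icc ((dpoly P u).eval β) ((dpoly P u).eval 0) := by
    rw [h0]; exact ⟨hlt.le, zero_le_one⟩
  obtain ⟨t, ht, hgt⟩ := intermediate_value_Icc' hβ0 hcont hmem
  exact hne t ht.1 (lt_of_le_of_lt ht.2 hβ1) hgt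

lemma eval_wpoly (P : U → E → E → ℝ) (c : E → U → ℝ) (hP : IsStochastic P) (u : E → U)
    {β : ℝ} (hβ0 : 0 ≤ β) (hβ1 : β < 1) (x : E) :
    (wpoly P c u x).eval β = (Bmat P u β).det * Vstat P c hP u hβ0 hβ1 x := by
  have hBV : Bmat P u β *ᵥ Vstat P c hP u hβ0 hβ1 = fun y => c y (u y) := by
    funext z
    rw [Bmat_mulVec]
    have := Vstat_fixed P c hP u hβ0 hβ1 z
    linarith
  have hadj : ∀ x y : E, ((pmat P u).adjugate x y).eval β = (Bmat P u β).adjugate x y := by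
    intro x y
    have := RingHom.map_adjugate (Polynomial.evalRingHom β) (pmat P u)
    rw [pmat_map] at this
    have h2 : ((evalRingHom β).mapMatrix (pmat P u).adjugate) x y
        = (Bmat P u β).adjugate x y := by rw [this]
    simpa [RingHom.mapMatrix_apply, Matrix.map_apply] using h2
  have h1 : (wpoly P c u x).eval β
      = ((Bmat P u β).adjugate *ᵥ fun y => c y (u y)) x := by
    simp only [wpoly, Matrix.mulVec, dotProduct]
    rw [Polynomial.eval_finset_sum]
    refine Finset.sum_congr rfl (fun y _ => ?_)
    rw [Polynomial.eval_mul, hadj, Polynomial.eval_C]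
  rw [h1, ← hBV, Matrix.mulVec_mulVec, Matrix.adjugate_mul, Matrix.smul_mulVec,
    Matrix.one_mulVec]
  simp

noncomputable def qpoly (P : U → E → E → ℝ) (c : E → U → ℝ) (u u' : E → U) (x : E) :
    Polynomial ℝ :=
  wpoly P c u x * dpoly P u' - wpoly P c u' x * dpoly P u

lemma eval_qpoly (P : U → E → E → ℝ) (c : E → U → ℝ) (hP : IsStochastic P)
    (u u' : E → U) {β : ℝ} (hβ0 : 0 ≤ β) (hβ1 : β < 1) (x : E) :
    (qpoly P c u u' x).eval β
      = (dpoly P u).eval β * (dpoly P u').eval β *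
        (Vstat P c hP u hβ0 hβ1 x - Vstat P c hP u' hβ0 hβ1 x) := by
  simp only [qpoly, Polynomial.eval_sub, Polynomial.eval_mul,
    eval_wpoly P c hP u hβ0 hβ1 x, eval_wpoly P c hP u' hβ0 hβ1 x, eval_dpoly]
  ring

end MDPwork5
section MDPwork6

open Polynomial

variable {E U : Type*} [Fintype E] [DecidableEq E] [Fintype U] [Nonempty E] [Nonempty U]

/-- The finite set of breakpoints: `0`, `1`, and all roots in `(0,1)` of the polynomials
comparing values of pairs of stationary policies. -/
noncomputable def bpSet (P : U → E → E → ℝ) (c : E → U → ℝ) : Finset ℝ :=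
  insert 0 (insert 1 ((Finset.univ : Finset ((E → U) × (E → U) × E)).biUnion
    (fun t => (qpoly P c t.1 t.2.1 t.2.2).roots.toFinset.filter
      (fun r => 0 < r ∧ r < 1))))

lemma zero_mem_bpSet (P : U → E → E → ℝ) (c : E → U → ℝ) : (0:ℝ) ∈ bpSet P c :=
  Finset.mem_insert_self _ _

lemma one_mem_bpSet (P : U → E → E → ℝ) (c : E → U → ℝ) : (1:ℝ) ∈ bpSet P c :=
  Finset.mem_insert.mpr (Or.inr (Finset.mem_insert_self _ _))

lemma bpSet_subset (P : U → E → E → ℝ) (c : E → U → ℝ) :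
    ∀ r ∈ bpSet P c, 0 ≤ r ∧ r ≤ 1 := by
  intro r hr
  rcases Finset.mem_insert.mp hr with h | h
  · subst h; exact ⟨le_refl 0, zero_le_one⟩
  rcases Finset.mem_insert.mp h with h | h
  · subst h; exact ⟨zero_le_one, le_refl 1⟩
  obtain ⟨t, _, ht⟩ := Finset.mem_biUnion.mp h
  have := (Finset.mem_filter.mp ht).2
  exact ⟨this.1.le, this.2.le⟩

lemma mem_bpSet_of_root (P : U → E → E → ℝ) (c : E → U → ℝ) {u u' : E → U} {x : E}
    {β : ℝ} (hβ : β ∈ Set.Ioo (0:ℝ) 1) (hq : qpoly P c u u' x ≠ 0)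
    (h0 : (qpoly P c u u' x).eval β = 0) : β ∈ bpSet P c := by
  unfold bpSet
  refine Finset.mem_insert.mpr (Or.inr (Finset.mem_insert.mpr (Or.inr ?_)))
  refine Finset.mem_biUnion.mpr ⟨(u, u', x), Finset.mem_univ _, ?_⟩
  rw [Finset.mem_filter, Multiset.mem_toFinset]
  exact ⟨(Polynomial.mem_roots hq).mpr h0, hβ.1, hβ.2⟩

lemma Vstat_le_on_interval (P : U → E → E → ℝ) (c : E → U → ℝ) (hP : IsStochastic P)
    {lo hi β0 β : ℝ}
    (hsub : Set.Ioo lo hi ⊆ Set.Ioo (0:ℝ) 1)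
    (hfree : ∀ t ∈ Set.Ioo lo hi, t ∉ bpSet P c)
    (hβ0 : β0 ∈ Set.Ioo lo hi) (hβ : β ∈ Set.Ioo lo hi)
    (u u' : E → U) (x : E)
    (h00 : 0 ≤ β0) (h01 : β0 < 1) (hb0 : 0 ≤ β) (hb1 : β < 1)
    (hle : Vstat P c hP u' h00 h01 x ≤ Vstat P c hP u h00 h01 x) :
    Vstat P c hP u' hb0 hb1 x ≤ Vstat P c hP u hb0 hb1 x := by
  set q := qpoly P c u u' x with hqdef
  have hEβ := eval_qpoly P c hP u u' hb0 hb1 x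
  have hEβ0 := eval_qpoly P c hP u u' h00 h01 x
  have hd1β := dpoly_pos P hP u hb0 hb1
  have hd2β := dpoly_pos P hP u' hb0 hb1
  have hd1β0 := dpoly_pos P hP u h00 h01
  have hd2β0 := dpoly_pos P hP u' h00 h01
  by_cases hq : q = 0
  · have h2 : (dpoly P u).eval β * (dpoly P u').eval β *
        (Vstat P c hP u hb0 hb1 x - Vstat P c hP u' hb0 hb1 x) = 0 := by
      rw [← hEβ, hqdef] at *
      rw [← hEβ]
      rw [hq]
      simp
    rcases mul_eq_zero.mp h2 with h | h
    · exfalso; rcases mul_eq_zero.mp h with h' | h' <;> nlinarith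
    · linarith
  · have hnoroot : ∀ t ∈ Set.Ioo lo hi, q.eval t ≠ 0 := by
      intro t ht h0
      exact hfree t ht (mem_bpSet_of_root P c (hsub ht) hq h0)
    have hq0pos : 0 < q.eval β0 := by
      have hne := hnoroot β0 hβ0
      have hnn : 0 ≤ q.eval β0 := by
        rw [hqdef, hEβ0]
        exact mul_nonneg (mul_pos hd1β0 hd2β0).le (by linarith)
      exact lt_of_le_of_ne hnn (Ne.symm hne)
    have hqβpos : 0 < q.eval β := by
      by_contra hle'
      push_neg at hle'
      have hlt : q.eval β < 0 := lt_of_le_of_ne hle' (hnoroot β hβ)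
      have hcont : ∀ a b : ℝ, ContinuousOn (fun t => q.eval t) (Set.Icc a b) :=
        fun a b => q.continuous.continuousOn
      rcases lt_trichotomy β β0 with h | h | h
      · obtain ⟨t, ht, hqt⟩ := intermediate_value_Ioo h.le (hcont β β0)
          (Set.mem_Ioo.mpr ⟨hlt, hq0pos⟩)
        exact hnoroot t ⟨lt_trans hβ.1 ht.1, lt_trans ht.2 hβ0.2⟩ hqt
      · rw [h] at hlt; linarith
      · obtain ⟨t, ht, hqt⟩ := intermediate_value_Ioo' h.le (hcont β0 β)
          (Set.mem_Ioo.mpr ⟨hlt, hq0pos⟩)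
        exact hnoroot t ⟨lt_trans hβ0.1 ht.1, lt_trans ht.2 hβ.2⟩ hqt
    have h3 : 0 < (dpoly P u).eval β * (dpoly P u').eval β := mul_pos hd1β hd2β
    have h4 : 0 < (dpoly P u).eval β * (dpoly P u').eval β *
        (Vstat P c hP u hb0 hb1 x - Vstat P c hP u' hb0 hb1 x) := by
      rw [← hEβ]
      rw [hqdef] at hqβpos
      exact hqβpos
    by_contra hcon
    push_neg at hcon
    have h5 : (dpoly P u).eval β * (dpoly P u').eval β *
        (Vstat P c hP u hb0 hb1 x - Vstat P c hP u' hb0 hb1 x) < 0 :=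
      mul_neg_of_pos_of_neg h3 (by linarith)
    linarith

end MDPwork6
/-- in the risk-neutral case `γ = 0`, the interval `(0,1)` of discount factors
can be partitioned into finitely many subintervals, on each of which a single stationary
Markov policy is discount optimal. -/
theorem finite_partition_of_discount_factors
    {E U : Type*} [Fintype E] [DecidableEq E] [Fintype U] [Nonempty E] [Nonempty U]
    (P : U → E → E → ℝ) (c : E → U → ℝ)
    (hP : IsStochastic P) :
    ∃ (k : ℕ) (b : Fin (k + 1) → ℝ) (u : Fin k → E → U),
      b 0 = 0 ∧ b (Fin.last k) = 1 ∧ StrictMono b ∧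
      ∀ j : Fin k, ∀ β ∈ Set.Ioo (b j.castSucc) (b j.succ), ∀ x : E,
        Jdisc P c 0 x (stationaryPolicy (u j)) β =
          ⨆ pol : Policy E U, Jdisc P c 0 x pol β := by
  classical
  set R : Finset ℝ := bpSet P c with hRdef
  set L : List ℝ := R.sort (· ≤ ·) with hLdef
  have hsorted : L.SortedLT := R.sortedLT_sort
  have h0L : (0:ℝ) ∈ L := (Finset.mem_sort _).mpr (zero_mem_bpSet P c)
  have h1L : (1:ℝ) ∈ L := (Finset.mem_sort _).mpr (one_mem_bpSet P c)
  have hmemL : ∀ r ∈ L, 0 ≤ r ∧ r ≤ 1 := fun r hr =>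
    bpSet_subset P c r ((Finset.mem_sort _).mp hr)
  have hLpos : 0 < L.length := List.length_pos_iff.mpr (List.ne_nil_of_mem h0L)
  set k : ℕ := L.length - 1 with hkdef
  have hk : L.length = k + 1 := by omega
  set b : Fin (k+1) → ℝ := fun j => L.get (Fin.cast hk.symm j) with hbdef
  have hbmono : StrictMono b := by
    intro i j hij
    refine hsorted.strictMono_get ?_
    simp only [Fin.lt_def, Fin.coe_cast]
    exact hij
  have hbmem : ∀ j : Fin (k+1), b j ∈ L := fun j => L.get_mem _
  have hb_le : ∀ j : Fin (k+1), 0 ≤ b j ∧ b j ≤ 1 := fun j => hmemL _ (hbmem j)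
  have hb0 : b 0 = 0 := by
    obtain ⟨m, hm⟩ := List.mem_iff_get.mp h0L
    refine le_antisymm ?_ (hb_le 0).1
    have h2 : L.get (Fin.cast hk.symm 0) ≤ L.get m :=
      hsorted.strictMono_get.monotone (by simp [Fin.le_def])
    rw [hm] at h2; exact h2
  have hb1 : b (Fin.last k) = 1 := by
    obtain ⟨m, hm⟩ := List.mem_iff_get.mp h1L
    refine le_antisymm (hb_le _).2 ?_
    have h2 : L.get m ≤ L.get (Fin.cast hk.symm (Fin.last k)) := by
      refine hsorted.strictMono_get.monotone ?_
      simp only [Fin.le_def, Fin.coe_cast, Fin.val_last]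
      have := m.2
      omega
    rw [hm] at h2; exact h2
  have hIsub : ∀ j : Fin k, Set.Ioo (b j.castSucc) (b j.succ) ⊆ Set.Ioo (0:ℝ) 1 := by
    intro j β hβ
    constructor
    · exact lt_of_le_of_lt (by rw [← hb0]; exact hbmono.monotone (Fin.zero_le _)) hβ.1
    · exact lt_of_lt_of_le hβ.2 (by rw [← hb1]; exact hbmono.monotone (Fin.le_last _))
  have hfree : ∀ j : Fin k, ∀ t ∈ Set.Ioo (b j.castSucc) (b j.succ), t ∉ R := by
    intro j t ht htR
    obtain ⟨m, hm⟩ := List.mem_iff_get.mp ((Finset.mem_sort (α := ℝ) (· ≤ ·)).mpr htR)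
    have h1 : (Fin.cast hk.symm j.castSucc) < m := by
      apply hsorted.strictMono_get.lt_iff_lt.mp
      rw [hm]; exact ht.1
    have h2 : m < (Fin.cast hk.symm j.succ) := by
      apply hsorted.strictMono_get.lt_iff_lt.mp
      rw [hm]; exact ht.2
    simp only [Fin.lt_def, Fin.coe_cast, Fin.coe_castSucc, Fin.val_succ] at h1 h2
    omega
  have hmid : ∀ j : Fin k, (b j.castSucc + b j.succ)/2 ∈ Set.Ioo (b j.castSucc) (b j.succ) := by
    intro j
    have := hbmono (Fin.castSucc_lt_succ (i := j))
    exact ⟨by linarith, by linarith⟩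
  have hmid01 : ∀ j : Fin k, (b j.castSucc + b j.succ)/2 ∈ Set.Ioo (0:ℝ) 1 :=
    fun j => hIsub j (hmid j)
  have hopt : ∀ j : Fin k, ∃ us : E → U,
      Vstat P c hP us (hmid01 j).1.le (hmid01 j).2
        = Vopt P c hP (hmid01 j).1.le (hmid01 j).2 :=
    fun j => exists_opt_stationary P c hP _ _
  choose uopt huopt using hopt
  refine ⟨k, b, uopt, hb0, hb1, hbmono, ?_⟩
  intro j β hβ x
  have hβ01 : β ∈ Set.Ioo (0:ℝ) 1 := hIsub j hβ
  have hβ0 : 0 ≤ β := hβ01.1.le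
  have hβ1 : β < 1 := hβ01.2
  rw [Jdisc_stat P c hP (uopt j) hβ0 hβ1 x, iSup_Jdisc_eq_Vopt P c hP hβ0 hβ1 x]
  refine le_antisymm ?_ ?_
  · rw [← Jdisc_stat P c hP (uopt j) hβ0 hβ1 x]
    exact Jdisc_le_Vopt P c hP hβ0 hβ1 _ x
  · obtain ⟨u', hu'⟩ := exists_opt_stationary P c hP hβ0 hβ1
    rw [← hu']
    refine Vstat_le_on_interval P c hP (hIsub j) (hfree j) (hmid j) hβ (uopt j) u' x
      (hmid01 j).1.le (hmid01 j).2 hβ0 hβ1 ?_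
    rw [huopt j]
    rw [← Jdisc_stat P c hP u' (hmid01 j).1.le (hmid01 j).2 x]
    exact Jdisc_le_Vopt P c hP _ _ _ x
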